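/- arXiv:1904.01634 — 5 statements merged into one kernel-verified Lean document; each statement's English description precedes it below -/
import Mathlib

section
/- Suppose matrices Φx and Φu satisfy (I - ZA)Φx - ZB·Φu = I, and suppose Φx is invertible. Define K = Φu·Φx⁻¹. Then (I - Z(A + BK)) = Φx⁻¹, and consequently (I - Z(A+BK))⁻¹ = Φx and K·(I - Z(A+BK))⁻¹ = Φu. -/
/-- Sufficiency direction of the finite-horizon SLS parameterization: if
`(I - ZA)Φx - ZBΦu = I` and `Φx` is invertible, then `K = Φu Φx⁻¹` satisfies
`I - Z(A+BK) = Φx⁻¹`, hence `(I - Z(A+BK))⁻¹ = Φx` and `K (I - Z(A+BK))⁻¹ = Φu`. -/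
theorem stmt_2 {n p : ℕ} (Z A Φx : Matrix (Fin n) (Fin n) ℝ) (B : Matrix (Fin n) (Fin p) ℝ)
    (Φu : Matrix (Fin p) (Fin n) ℝ) (hΦx : IsUnit Φx)
    (h : (1 - Z * A) * Φx - Z * B * Φu = 1) :
    (1 - Z * (A + B * (Φu * Φx⁻¹))) = Φx⁻¹ ∧
    (1 - Z * (A + B * (Φu * Φx⁻¹)))⁻¹ = Φx ∧
    (Φu * Φx⁻¹) * (1 - Z * (A + B * (Φu * Φx⁻¹)))⁻¹ = Φu := by
  have hdet : IsUnit Φx.det := (Matrix.isUnit_iff_isUnit_det Φx).mp hΦx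
  have hinv : Φx * Φx⁻¹ = 1 := Matrix.mul_nonsing_inv _ hdet
  have hinv' : Φx⁻¹ * Φx = 1 := Matrix.nonsing_inv_mul _ hdet
  have h2 := congrArg (· * Φx⁻¹) h
  simp only [one_mul] at h2
  rw [sub_mul, mul_assoc (1 - Z * A), hinv, mul_one, Matrix.mul_assoc (Z * B) Φu Φx⁻¹] at h2
  have key : (1 - Z * (A + B * (Φu * Φx⁻¹))) = Φx⁻¹ := by
    rw [mul_add, sub_add_eq_sub_sub, ← Matrix.mul_assoc Z B (Φu * Φx⁻¹)]
    exact h2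
  refine ⟨key, ?_, ?_⟩
  · rw [key, Matrix.nonsing_inv_nonsing_inv _ hdet]
  · rw [key, Matrix.nonsing_inv_nonsing_inv _ hdet, Matrix.mul_assoc Φu Φx⁻¹ Φx, hinv', Matrix.mul_one]
end

section
/- Suppose matrices Φx, Φu, Δ satisfy (I - ZA)Φx - ZB·Φu = I + Δ, where Φx and I + Δ are invertible. Define K = Φu·Φx⁻¹. Then (I - Z(A+BK))⁻¹ = Φx·(I+Δ)⁻¹ and K·(I - Z(A+BK))⁻¹ = Φu·(I+Δ)⁻¹. -/
/-- Robust finite-horizon SLS: if `(I - ZA)Φx - ZBΦu = I + Δ` with `Φx` and `I + Δ`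
invertible, then `K = Φu Φx⁻¹` yields `(I - Z(A+BK))⁻¹ = Φx (I+Δ)⁻¹` and
`K (I - Z(A+BK))⁻¹ = Φu (I+Δ)⁻¹`. -/
theorem stmt_5 {n p : ℕ} (Z A Φx Δ : Matrix (Fin n) (Fin n) ℝ) (B : Matrix (Fin n) (Fin p) ℝ)
    (Φu : Matrix (Fin p) (Fin n) ℝ) (hΦx : IsUnit Φx) (hΔ : IsUnit (1 + Δ))
    (h : (1 - Z * A) * Φx - Z * B * Φu = 1 + Δ) :
    (1 - Z * (A + B * (Φu * Φx⁻¹)))⁻¹ = Φx * (1 + Δ)⁻¹ ∧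
    (Φu * Φx⁻¹) * (1 - Z * (A + B * (Φu * Φx⁻¹)))⁻¹ = Φu * (1 + Δ)⁻¹ := by
  have hdet : IsUnit Φx.det := (Matrix.isUnit_iff_isUnit_det Φx).mp hΦx
  have hinv : Φx⁻¹ * Φx = 1 := Matrix.nonsing_inv_mul Φx hdet
  have hM : (1 - Z * (A + B * (Φu * Φx⁻¹))) * Φx = 1 + Δ := by
    have : (1 - Z * (A + B * (Φu * Φx⁻¹))) * Φx
        = (1 - Z * A) * Φx - Z * B * (Φu * (Φx⁻¹ * Φx)) := by noncomm_ring; simp only [Matrix.mul_assoc]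
    rw [this, hinv, Matrix.mul_one, h]
  have hMeq : (1 - Z * (A + B * (Φu * Φx⁻¹))) = (1 + Δ) * Φx⁻¹ := by
    calc (1 - Z * (A + B * (Φu * Φx⁻¹)))
        = (1 - Z * (A + B * (Φu * Φx⁻¹))) * (Φx * Φx⁻¹) := by
          rw [Matrix.mul_nonsing_inv Φx hdet, Matrix.mul_one]
      _ = ((1 - Z * (A + B * (Φu * Φx⁻¹))) * Φx) * Φx⁻¹ := by rw [Matrix.mul_assoc]
      _ = (1 + Δ) * Φx⁻¹ := by rw [hM]
  have h1 : (1 - Z * (A + B * (Φu * Φx⁻¹)))⁻¹ = Φx * (1 + Δ)⁻¹ := by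
    rw [hMeq, Matrix.mul_inv_rev, Matrix.nonsing_inv_nonsing_inv Φx hdet]
  refine ⟨h1, ?_⟩
  rw [h1, Matrix.mul_assoc, ← Matrix.mul_assoc Φx⁻¹, hinv, Matrix.one_mul]
end

section
/- Let ΔA, ΔB, Φx, Φu be matrices with operator norms ‖ΔA‖ ≤ εA and ‖ΔB‖ ≤ εB. Then ‖ΔA·Φx + ΔB·Φu‖ ≤ √2 · ‖[εA·Φx; εB·Φu]‖, where [εA·Φx; εB·Φu] denotes the vertical block concatenation. -/
open scoped Matrix.Norms.L2Operator
open Matrix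
set_option maxHeartbeats 1000000

/-- If `‖ΔA‖ ≤ εA` and `‖ΔB‖ ≤ εB` (operator norms), then
`‖ΔA Φx + ΔB Φu‖ ≤ √2 ‖[εA Φx; εB Φu]‖` where `[·;·]` is vertical block concatenation. -/
theorem stmt_7 {m n p q : ℕ} (ΔA : Matrix (Fin m) (Fin n) ℝ) (ΔB : Matrix (Fin m) (Fin p) ℝ)
    (Φx : Matrix (Fin n) (Fin q) ℝ) (Φu : Matrix (Fin p) (Fin q) ℝ) (εA εB : ℝ)
    (hA : ‖ΔA‖ ≤ εA) (hB : ‖ΔB‖ ≤ εB) :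
    ‖ΔA * Φx + ΔB * Φu‖ ≤ Real.sqrt 2 * ‖Matrix.fromRows (εA • Φx) (εB • Φu)‖ := by
  set F := Matrix.fromRows (εA • Φx) (εB • Φu) with hF
  have hεA : (0:ℝ) ≤ εA := le_trans (norm_nonneg _) hA
  have hεB : (0:ℝ) ≤ εB := le_trans (norm_nonneg _) hB
  rw [Matrix.l2_opNorm_def]
  apply ContinuousLinearMap.opNorm_le_bound
  · positivity
  intro x
  set a : EuclideanSpace ℝ (Fin n) := (EuclideanSpace.equiv (Fin n) ℝ).symm (Φx *ᵥ x) with ha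
  set b : EuclideanSpace ℝ (Fin p) := (EuclideanSpace.equiv (Fin p) ℝ).symm (Φu *ᵥ x) with hb
  have hFx : ‖(EuclideanSpace.equiv (Fin n ⊕ Fin p) ℝ).symm (F *ᵥ (x : Fin q → ℝ))‖
      = Real.sqrt (εA ^ 2 * ‖a‖ ^ 2 + εB ^ 2 * ‖b‖ ^ 2) := by
    rw [EuclideanSpace.norm_eq]
    congr 1
    rw [Fintype.sum_sum_type]
    have hna : ‖a‖ ^ 2 = ∑ i, ‖(Φx *ᵥ (x : Fin q → ℝ)) i‖ ^ 2 := by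
      rw [ha, EuclideanSpace.norm_eq, Real.sq_sqrt (by positivity)]
      rfl
    have hnb : ‖b‖ ^ 2 = ∑ i, ‖(Φu *ᵥ (x : Fin q → ℝ)) i‖ ^ 2 := by
      rw [hb, EuclideanSpace.norm_eq, Real.sq_sqrt (by positivity)]
      rfl
    have hmv : F *ᵥ (x : Fin q → ℝ)
        = Sum.elim ((εA • Φx) *ᵥ (x : Fin q → ℝ)) ((εB • Φu) *ᵥ (x : Fin q → ℝ)) :=
      Matrix.fromRows_mulVec _ _ _
    simp only [hmv, hna, hnb, Matrix.smul_mulVec, Finset.mul_sum]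
    congr 1 <;> · apply Finset.sum_congr rfl; intro i _
                  simp [Pi.smul_apply, smul_eq_mul, abs_mul, mul_pow, sq_abs]
  -- bound the action of the sum matrix
  have hact : ‖(EuclideanSpace.equiv (Fin m) ℝ).symm ((ΔA * Φx + ΔB * Φu) *ᵥ (x : Fin q → ℝ))‖
      ≤ εA * ‖a‖ + εB * ‖b‖ := by
    have hsplit : (ΔA * Φx + ΔB * Φu) *ᵥ (x : Fin q → ℝ)
        = ΔA *ᵥ (Φx *ᵥ (x : Fin q → ℝ)) + ΔB *ᵥ (Φu *ᵥ (x : Fin q → ℝ)) := by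
      rw [Matrix.add_mulVec, Matrix.mulVec_mulVec, Matrix.mulVec_mulVec]
    rw [hsplit, map_add]
    refine le_trans (norm_add_le _ _) (add_le_add ?_ ?_)
    · exact le_trans (Matrix.l2_opNorm_mulVec ΔA a)
        (mul_le_mul_of_nonneg_right hA (norm_nonneg _))
    · exact le_trans (Matrix.l2_opNorm_mulVec ΔB b)
        (mul_le_mul_of_nonneg_right hB (norm_nonneg _))
  have hCS : εA * ‖a‖ + εB * ‖b‖ ≤ Real.sqrt 2 *
      Real.sqrt (εA ^ 2 * ‖a‖ ^ 2 + εB ^ 2 * ‖b‖ ^ 2) := by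
    rw [← Real.sqrt_mul (by norm_num)]
    rw [show Real.sqrt (2 * (εA ^ 2 * ‖a‖ ^ 2 + εB ^ 2 * ‖b‖ ^ 2))
        = Real.sqrt (2 * (εA ^ 2 * ‖a‖ ^ 2 + εB ^ 2 * ‖b‖ ^ 2)) from rfl]
    have h1 : (εA * ‖a‖ + εB * ‖b‖) ^ 2 ≤ 2 * (εA ^ 2 * ‖a‖ ^ 2 + εB ^ 2 * ‖b‖ ^ 2) := by
      nlinarith [sq_nonneg (εA * ‖a‖ - εB * ‖b‖)]
    have h2 : (0:ℝ) ≤ εA * ‖a‖ + εB * ‖b‖ := by positivity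
    calc εA * ‖a‖ + εB * ‖b‖ = Real.sqrt ((εA * ‖a‖ + εB * ‖b‖) ^ 2) :=
          (Real.sqrt_sq h2).symm
      _ ≤ _ := Real.sqrt_le_sqrt h1
  have hFbound : Real.sqrt (εA ^ 2 * ‖a‖ ^ 2 + εB ^ 2 * ‖b‖ ^ 2) ≤ ‖F‖ * ‖x‖ := by
    rw [← hFx]; exact Matrix.l2_opNorm_mulVec F x
  calc ‖(LinearEquiv.trans Matrix.toEuclideanLin LinearMap.toContinuousLinearMap
        (ΔA * Φx + ΔB * Φu)) x‖
      = ‖(EuclideanSpace.equiv (Fin m) ℝ).symm ((ΔA * Φx + ΔB * Φu) *ᵥ (x : Fin q → ℝ))‖ := by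
        rfl
    _ ≤ εA * ‖a‖ + εB * ‖b‖ := hact
    _ ≤ Real.sqrt 2 * Real.sqrt (εA ^ 2 * ‖a‖ ^ 2 + εB ^ 2 * ‖b‖ ^ 2) := hCS
    _ ≤ Real.sqrt 2 * (‖F‖ * ‖x‖) :=
        mul_le_mul_of_nonneg_left hFbound (Real.sqrt_nonneg 2)
    _ = Real.sqrt 2 * ‖F‖ * ‖x‖ := by ring
end

section
/- Sparsity constraints on strongly connected plants are not quadratically invariant: let P be an n×n matrix all of whose entries are nonzero (n ≥ 2), and let C be the subspace of n×n matrices whose (i,j) entry is zero for some fixed pair i ≠ j. Then C is not quadratically invariant with respect to P, i.e., there exists K ∈ C with K·P·K ∉ C. -/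
/-- Sparsity constraints on strongly connected plants are not quadratically invariant:
if every entry of `P` is nonzero and `i ≠ j`, then there is `K` with `K i j = 0` but
`(KPK) i j ≠ 0`. -/
theorem stmt_16 {n : ℕ} (hn : 2 ≤ n) (P : Matrix (Fin n) (Fin n) ℝ)
    (hP : ∀ i j, P i j ≠ 0) (i j : Fin n) (hij : i ≠ j) :
    ∃ K : Matrix (Fin n) (Fin n) ℝ, K i j = 0 ∧ (K * P * K) i j ≠ 0 := by
  refine ⟨Matrix.single i i 1 + Matrix.single j j 1, ?_, ?_⟩
  · simp [Matrix.single, hij, hij.symm]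
  · have : (Matrix.single i i 1 + Matrix.single j j (1:ℝ)) * P *
      (Matrix.single i i 1 + Matrix.single j j 1) = _ := rfl
    simp [Matrix.add_mul, Matrix.mul_add, Matrix.single_mul_apply_same,
      Matrix.mul_single_apply_same, hij, hij.symm, hP i j]
end

section
/- Under the conditions of the robust finite-horizon SLS theorem, the worst-case objective admits the bound: if (I - ZA)Φx - ZB·Φu = I + Δ with ‖Δ‖ < 1 (operator norm) and M is any matrix, then ‖M·[Φx; Φu]·(I+Δ)⁻¹‖_F ≤ ‖M·[Φx; Φu]‖_F · (1/(1 - ‖Δ‖)). -/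
open scoped Matrix.Norms.L2Operator
open scoped Matrix

/-- The Frobenius norm of a real matrix. -/
noncomputable def frobNorm {m n : Type*} [Fintype m] [Fintype n] (M : Matrix m n ℝ) : ℝ :=
  Real.sqrt (∑ i, ∑ j, (M i j) ^ 2)

lemma frobNorm_nonneg {m n : Type*} [Fintype m] [Fintype n] (M : Matrix m n ℝ) :
    0 ≤ frobNorm M := Real.sqrt_nonneg _

/-- Mixed submultiplicativity: `‖X Y‖_F ≤ ‖X‖_F ‖Y‖` with `‖·‖` the L2 operator norm. -/
lemma frobNorm_mul_le {r m k : ℕ} (X : Matrix (Fin r) (Fin m) ℝ)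
    (Y : Matrix (Fin m) (Fin k) ℝ) :
    frobNorm (X * Y) ≤ frobNorm X * ‖Y‖ := by
  have hrow : ∀ i : Fin r,
      ∑ j, ((X * Y) i j) ^ 2 ≤ ‖Y.transpose‖ ^ 2 * ∑ j, (X i j) ^ 2 := by
    intro i
    have hx : ∀ (v : Fin m → ℝ),
        ‖(EuclideanSpace.equiv (Fin m) ℝ).symm v‖ ^ 2 = ∑ j, (v j) ^ 2 := by
      intro v
      rw [EuclideanSpace.norm_eq]
      rw [Real.sq_sqrt (by positivity)]
      simp [sq_abs]
    have hy : ∀ (v : Fin k → ℝ),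
        ‖(EuclideanSpace.equiv (Fin k) ℝ).symm v‖ ^ 2 = ∑ j, (v j) ^ 2 := by
      intro v
      rw [EuclideanSpace.norm_eq]
      rw [Real.sq_sqrt (by positivity)]
      simp [sq_abs]
    have hrw : (fun j => (X * Y) i j) = Y.transpose *ᵥ ((EuclideanSpace.equiv (Fin m) ℝ).symm (X i)) := by
      funext j
      simp [Matrix.mul_apply, Matrix.mulVec, dotProduct, Matrix.transpose_apply,
        mul_comm]
    have hle := Matrix.l2_opNorm_mulVec Y.transpose ((EuclideanSpace.equiv (Fin m) ℝ).symm (X i))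
    have hsq : ‖(EuclideanSpace.equiv (Fin k) ℝ).symm
          (Y.transpose *ᵥ ((EuclideanSpace.equiv (Fin m) ℝ).symm (X i)))‖ ^ 2
        ≤ (‖Y.transpose‖ * ‖(EuclideanSpace.equiv (Fin m) ℝ).symm (X i)‖) ^ 2 := by
      apply sq_le_sq' _ hle
      exact le_trans (neg_nonpos.mpr (by positivity)) (norm_nonneg _)
    calc ∑ j, ((X * Y) i j) ^ 2
        = ‖(EuclideanSpace.equiv (Fin k) ℝ).symm
            (Y.transpose *ᵥ ((EuclideanSpace.equiv (Fin m) ℝ).symm (X i)))‖ ^ 2 := by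
          rw [hy]; exact Finset.sum_congr rfl fun j _ => congrArg (· ^ 2) (congrFun hrw j)
      _ ≤ (‖Y.transpose‖ * ‖(EuclideanSpace.equiv (Fin m) ℝ).symm (X i)‖) ^ 2 := hsq
      _ = ‖Y.transpose‖ ^ 2 * ∑ j, (X i j) ^ 2 := by
          rw [mul_pow, hx]
  have hT : ‖Y.transpose‖ = ‖Y‖ := by
    have := Matrix.l2_opNorm_conjTranspose Y
    simpa [Matrix.conjTranspose_eq_transpose_of_trivial] using this
  unfold frobNorm
  rw [← hT, ← Real.sqrt_sq (norm_nonneg Y.transpose), ← Real.sqrt_mul (by positivity),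
    mul_comm (∑ i, ∑ j, (X i j) ^ 2)]
  apply Real.sqrt_le_sqrt
  rw [Finset.mul_sum]
  exact Finset.sum_le_sum fun i _ => hrow i

/-- Neumann series bound for the matrix inverse. -/
lemma inv_one_add_norm_le {n : ℕ} (Δ : Matrix (Fin n) (Fin n) ℝ) (hΔ : ‖Δ‖ < 1) :
    ‖(1 + Δ)⁻¹‖ ≤ 1 / (1 - ‖Δ‖) := by
  have hΔ' : ‖(-Δ)‖ < 1 := by rwa [norm_neg]
  have hinv : (1 + Δ)⁻¹ = ∑' i : ℕ, (-Δ) ^ i := by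
    rw [Matrix.nonsing_inv_eq_ringInverse]
    rw [geom_series_eq_inverse (-Δ) hΔ']
    congr 1
    rw [sub_neg_eq_add]
  have hone : ‖(1 : Matrix (Fin n) (Fin n) ℝ)‖ ≤ 1 := by
    rw [Matrix.cstar_norm_def, map_one]
    exact ContinuousLinearMap.norm_id_le
  have := tsum_geometric_le_of_norm_lt_one (-Δ) hΔ'
  rw [hinv]
  rw [norm_neg] at this
  rw [one_div]
  linarith

/-- Robust SLS objective bound: if `(I - ZA)Φx - ZBΦu = I + Δ` with `‖Δ‖ < 1`
(operator norm), then for any `M`,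
`‖M [Φx; Φu] (I+Δ)⁻¹‖_F ≤ ‖M [Φx; Φu]‖_F · 1/(1-‖Δ‖)`. -/
theorem stmt_18 {n p r : ℕ} (Z A Φx Δ : Matrix (Fin n) (Fin n) ℝ)
    (B : Matrix (Fin n) (Fin p) ℝ) (Φu : Matrix (Fin p) (Fin n) ℝ)
    (M : Matrix (Fin r) (Fin n ⊕ Fin p) ℝ)
    (h : (1 - Z * A) * Φx - Z * B * Φu = 1 + Δ) (hΔ : ‖Δ‖ < 1) :
    frobNorm (M * (Matrix.fromRows Φx Φu * (1 + Δ)⁻¹))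
      ≤ frobNorm (M * Matrix.fromRows Φx Φu) * (1 / (1 - ‖Δ‖)) := by
  rw [show M * (Matrix.fromRows Φx Φu * (1 + Δ)⁻¹) = M * Matrix.fromRows Φx Φu * (1 + Δ)⁻¹ from (Matrix.mul_assoc _ _ _).symm]
  calc frobNorm (M * Matrix.fromRows Φx Φu * (1 + Δ)⁻¹)
      ≤ frobNorm (M * Matrix.fromRows Φx Φu) * ‖(1 + Δ)⁻¹‖ := by
        exact frobNorm_mul_le (M * Matrix.fromRows Φx Φu) (1 + Δ)⁻¹
    _ ≤ frobNorm (M * Matrix.fromRows Φx Φu) * (1 / (1 - ‖Δ‖)) := by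
        apply mul_le_mul_of_nonneg_left (inv_one_add_norm_le Δ hΔ) (frobNorm_nonneg _)
end
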